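/- Let S ≥ 2 and let b be an S×S matrix with entries in {0,1} such that b_{1,u} = 1 for all columns u and every row sum β_i = Σ_s b_{i,s} equals 2 for all rows i ≥ 2. For each column s define the column sum excluding the first row α_s = Σ_{i=2}^{S} b_{i,s}, the quantity q_s = (1/S) · ∏_{j=2}^{S} (1 − b_{j,s}/β_j), and q = Σ_{s=1}^{S} q_s. Suppose s and u are two columns with α_s > α_u, and i ≥ 2 is a row with b_{i,s} = 1 and b_{i,u} = 0. If b' is obtained from b by interchanging these two entries (setting b'_{i,s} = 0 and b'_{i,u} = 1), then the corresponding value q' satisfies q' ≤ q. -/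

import Mathlib

open Finset

/-- `qcol b s = (b 0 s / β 0) · ∏_{j ≠ 0} (1 − b j s / β j)`, where `β j = ∑_u b j u`
is the `j`-th row sum; row `0` plays the role of "row 1" of the paper.  When the first
row is all ones, `b 0 s / β 0 = 1/S`. -/
noncomputable def qcol {S : ℕ} [NeZero S] (b : Fin S → Fin S → ℝ) (s : Fin S) : ℝ :=
  (b 0 s / ∑ u, b 0 u) * ∏ j ∈ univ.erase (0 : Fin S), (1 - b j s / ∑ u, b j u)

/-- `qval b = ∑_s qcol b s`, the probability that node 1 gets scheduled in a round. -/
noncomputable def qval {S : ℕ} [NeZero S] (b : Fin S → Fin S → ℝ) : ℝ :=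
  ∑ s, qcol b s

/-- Lemma 4: for a 0/1 matrix `b` whose first row is all ones and in which every
non-first row sum is exactly 2, if `s, u` are columns with `α s > α u` (column sums
excluding the first row), and `i` is a non-first row with `b i s = 1` and `b i u = 0`,
then interchanging these two entries does not increase `q`. -/
theorem qval_le_of_swap_entries {S : ℕ} [NeZero S] (hS : 2 ≤ S)
    (b : Fin S → Fin S → ℝ)
    (hb01 : ∀ j v, b j v = 0 ∨ b j v = 1)
    (hrow1 : ∀ v, b 0 v = 1)
    (hβ : ∀ j, j ≠ 0 → ∑ v, b j v = 2)
    (s u i : Fin S) (hi : i ≠ 0)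
    (hα : ∑ j ∈ univ.erase (0 : Fin S), b j u < ∑ j ∈ univ.erase (0 : Fin S), b j s)
    (hbis : b i s = 1) (hbiu : b i u = 0) :
    qval (fun j v => if j = i ∧ v = s then 0 else if j = i ∧ v = u then 1 else b j v)
      ≤ qval b := by
  have hsu : s ≠ u := by
    intro h; rw [h, hbiu] at hbis; norm_num at hbis
  have hus : u ≠ s := hsu.symm
  set b' : Fin S → Fin S → ℝ :=
    fun j v => if j = i ∧ v = s then 0 else if j = i ∧ v = u then 1 else b j v with hb'def
  have hb'ne : ∀ j, j ≠ i → ∀ v, b' j v = b j v := fun j hj v => by simp [hb'def, hj]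
  have hb'is : b' i s = 0 := by simp [hb'def]
  have hb'iu : b' i u = 1 := by simp [hb'def, hus]
  have hb'iv : ∀ v, v ≠ s → v ≠ u → b' i v = b i v := fun v h1 h2 => by
    simp [hb'def, h1, h2]
  have himem : i ∈ univ.erase (0 : Fin S) := mem_erase.2 ⟨hi, mem_univ i⟩
  set T : Finset (Fin S) := (univ.erase (0 : Fin S)).erase i with hT
  have hTmem : ∀ j ∈ T, j ≠ 0 ∧ j ≠ i := fun j hj =>
    ⟨(mem_erase.1 (mem_erase.1 hj).2).1, (mem_erase.1 hj).1⟩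
  -- row sums of b' equal those of b
  have hrowsum : ∀ j, ∑ v, b' j v = ∑ v, b j v := by
    intro j
    by_cases hj : j = i
    · subst hj
      have h1 : ∀ v, b' j v
          = b j v + ((if v = s then (-1 : ℝ) else 0) + (if v = u then (1 : ℝ) else 0)) := by
        intro v
        by_cases hvs : v = s
        · subst hvs; simp [hb'is, hbis, hsu]
        · by_cases hvu : v = u
          · subst hvu; simp [hb'iu, hbiu, hvs]
          · simp [hb'iv v hvs hvu, hvs, hvu]
      rw [Finset.sum_congr rfl fun v _ => h1 v, Finset.sum_add_distrib,
        Finset.sum_add_distrib]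
      simp
    · exact Finset.sum_congr rfl fun v _ => hb'ne j hj v
  have hrow1' : ∀ v, b' 0 v = 1 := fun v => by
    rw [hb'ne 0 (Ne.symm hi) v]; exact hrow1 v
  have hβ' : ∀ j, j ≠ 0 → ∑ v, b' j v = 2 := fun j hj => (hrowsum j).trans (hβ j hj)
  -- closed form for qcol
  have hq : ∀ (c : Fin S → Fin S → ℝ), (∀ v, c 0 v = 1) → (∀ j, j ≠ 0 → ∑ v, c j v = 2) →
      ∀ v, qcol c v = (1 / S) * ((1 - c i v / 2) * ∏ j ∈ T, (1 - c j v / 2)) := by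
    intro c h1 h2 v
    have hc0 : ∑ w, c 0 w = (S : ℝ) := by simp [h1]
    have hprod : ∏ j ∈ univ.erase (0 : Fin S), (1 - c j v / ∑ w, c j w)
        = ∏ j ∈ univ.erase (0 : Fin S), (1 - c j v / 2) := by
      refine Finset.prod_congr rfl fun j hj => ?_
      rw [h2 j (mem_erase.1 hj).1]
    unfold qcol
    rw [hc0, h1, hprod, ← Finset.mul_prod_erase _ _ himem]
  -- products over T agree for b and b'
  have hPT : ∀ v, ∏ j ∈ T, (1 - b' j v / 2) = ∏ j ∈ T, (1 - b j v / 2) :=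
    fun v => Finset.prod_congr rfl fun j hj => by rw [hb'ne j (hTmem j hj).2 v]
  -- products as powers of 1/2, sums as cardinalities
  have hpow : ∀ v, ∏ j ∈ T, (1 - b j v / 2)
      = (1 / 2 : ℝ) ^ (T.filter (fun j => b j v = 1)).card := by
    intro v
    rw [← Finset.prod_filter_mul_prod_filter_not T (fun j => b j v = 1)]
    have e1 : ∏ j ∈ T.filter (fun j => b j v = 1), (1 - b j v / 2)
        = (1 / 2 : ℝ) ^ (T.filter (fun j => b j v = 1)).card := by
      rw [← Finset.prod_const]
      refine Finset.prod_congr rfl fun j hj => ?_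
      rw [(Finset.mem_filter.1 hj).2]; norm_num
    have e2 : ∏ j ∈ T.filter (fun j => ¬ b j v = 1), (1 - b j v / 2) = 1 := by
      refine Finset.prod_eq_one fun j hj => ?_
      rcases hb01 j v with h | h
      · rw [h]; norm_num
      · exact absurd h (Finset.mem_filter.1 hj).2
    rw [e1, e2, mul_one]
  have hsumcard : ∀ v, ∑ j ∈ T, b j v
      = ((T.filter (fun j => b j v = 1)).card : ℝ) := by
    intro v
    rw [← Finset.sum_filter_add_sum_filter_not T (fun j => b j v = 1)]
    have e1 : ∑ j ∈ T.filter (fun j => b j v = 1), b j v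
        = ((T.filter (fun j => b j v = 1)).card : ℝ) := by
      rw [Finset.sum_congr rfl (fun j hj => (Finset.mem_filter.1 hj).2),
        Finset.sum_const, nsmul_eq_mul, mul_one]
    have e2 : ∑ j ∈ T.filter (fun j => ¬ b j v = 1), b j v = 0 := by
      refine Finset.sum_eq_zero fun j hj => ?_
      rcases hb01 j v with h | h
      · exact h
      · exact absurd h (Finset.mem_filter.1 hj).2
    rw [e1, e2, add_zero]
  -- cardinality comparison from hα
  have hαu : ∑ j ∈ univ.erase (0 : Fin S), b j u = b i u + ∑ j ∈ T, b j u :=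
    (Finset.add_sum_erase _ _ himem).symm
  have hαs : ∑ j ∈ univ.erase (0 : Fin S), b j s = b i s + ∑ j ∈ T, b j s :=
    (Finset.add_sum_erase _ _ himem).symm
  rw [hαu, hαs, hbis, hbiu, hsumcard, hsumcard] at hα
  have hcardle : (T.filter (fun j => b j u = 1)).card
      ≤ (T.filter (fun j => b j s = 1)).card := by
    have h1 : ((T.filter (fun j => b j u = 1)).card : ℝ)
        < ((T.filter (fun j => b j s = 1)).card : ℝ) + 1 := by linarith
    exact Nat.lt_succ_iff.mp (by exact_mod_cast h1)
  have hPle : ∏ j ∈ T, (1 - b j s / 2) ≤ ∏ j ∈ T, (1 - b j u / 2) := by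
    rw [hpow, hpow]
    exact pow_le_pow_of_le_one (by norm_num) (by norm_num) hcardle
  have hPnonneg : (0 : ℝ) ≤ ∏ j ∈ T, (1 - b j u / 2) := by
    rw [hpow]; positivity
  -- assemble
  have hqb := hq b hrow1 hβ
  have hqb' := hq b' hrow1' hβ'
  unfold qval
  rw [← Finset.add_sum_erase _ (qcol b') (mem_univ s),
    ← Finset.add_sum_erase _ (qcol b) (mem_univ s),
    ← Finset.add_sum_erase _ (qcol b') (mem_erase.2 ⟨hus, mem_univ u⟩),
    ← Finset.add_sum_erase _ (qcol b) (mem_erase.2 ⟨hus, mem_univ u⟩)]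
  have hrest : ∑ v ∈ (univ.erase s).erase u, qcol b' v
      = ∑ v ∈ (univ.erase s).erase u, qcol b v := by
    refine Finset.sum_congr rfl fun v hv => ?_
    have hvs : v ≠ s := (mem_erase.1 (mem_erase.1 hv).2).1
    have hvu : v ≠ u := (mem_erase.1 hv).1
    rw [hqb' v, hqb v, hb'iv v hvs hvu, hPT v]
  rw [hrest, hqb' s, hqb' u, hqb s, hqb u, hb'is, hb'iu, hbis, hbiu, hPT s, hPT u]
  have hS0 : (0 : ℝ) < 1 / S :=
    by positivity
  have hmul := mul_le_mul_of_nonneg_left hPle hS0.le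
  linarith [hmul]
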